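/- The Fischer–Ladner closure of a finite set of PDL formulas is finite. -/
import Mathlib


namespace PEDAL

mutual
inductive Form : Type where
  | atom : ℕ → Form
  | bot  : Form
  | neg  : Form → Form
  | or   : Form → Form → Form
  | dia  : Prog → Form → Form
  | nec  : Form → Form
deriving DecidableEq
inductive Prog : Type where
  | atom : ℕ → Prog
  | seq  : Prog → Prog → Prog
  | choice : Prog → Prog → Prog
  | star : Prog → Prog
  | test : Form → Prog
deriving DecidableEq
end

def Form.impl (A B : Form) : Form := Form.or (Form.neg A) B
def Form.and (A B : Form) : Form := Form.neg (Form.or (Form.neg A) (Form.neg B))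
def Form.iff (A B : Form) : Form := (A.impl B).and (B.impl A)
def Form.box (π : Prog) (A : Form) : Form := Form.neg (Form.dia π (Form.neg A))
def Form.diam (A : Form) : Form := Form.neg (Form.nec (Form.neg A))
def Form.top : Form := Form.neg Form.bot

/-- Boolean evaluation treating atoms, diamond- and box-formulas as atoms. -/
def beval (v : Form → Bool) : Form → Bool
  | Form.bot => false
  | Form.neg A => ! beval v A
  | Form.or A B => beval v A || beval v B
  | A => v A

def Taut (A : Form) : Prop := ∀ v, beval v A = true


structure ModelData (S : Type) where
  vf : ℕ → Set S
  vp : ℕ → S → S → Prop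
  Rbox : S → S → Prop

mutual
def Sat {S : Type} (M : ModelData S) (s : S) : Form → Prop
  | Form.atom a => s ∈ M.vf a
  | Form.bot => False
  | Form.neg A => ¬ Sat M s A
  | Form.or A B => Sat M s A ∨ Sat M s B
  | Form.dia π A => ∃ t, Rel M π s t ∧ Sat M t A
  | Form.nec A => ∀ t, M.Rbox s t → Sat M t A
def Rel {S : Type} (M : ModelData S) : Prog → S → S → Prop
  | Prog.atom p => M.vp p
  | Prog.seq π₁ π₂ => fun s u => ∃ t, Rel M π₁ s t ∧ Rel M π₂ t u
  | Prog.choice π₁ π₂ => fun s t => Rel M π₁ s t ∨ Rel M π₂ s t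
  | Prog.star π => Relation.ReflTransGen (Rel M π)
  | Prog.test A => fun s t => s = t ∧ Sat M s A
end
/-- The Hilbert system for PDL. -/
inductive PDLProv : Form → Prop where
  | taut {A : Form} : Taut A → PDLProv A
  | k {π : Prog} {A B : Form} : PDLProv ((Form.box π (A.impl B)).impl ((Form.box π A).impl (Form.box π B)))
  | boxAnd {π : Prog} {A B : Form} : PDLProv ((Form.box π (A.and B)).iff ((Form.box π A).and (Form.box π B)))
  | choice {π₁ π₂ : Prog} {A : Form} : PDLProv ((Form.box (Prog.choice π₁ π₂) A).iff ((Form.box π₁ A).and (Form.box π₂ A)))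
  | test {A B : Form} : PDLProv ((Form.box (Prog.test A) B).iff (A.impl B))
  | seq {π₁ π₂ : Prog} {A : Form} : PDLProv ((Form.box (Prog.seq π₁ π₂) A).iff (Form.box π₁ (Form.box π₂ A)))
  | fixpoint {π : Prog} {A : Form} : PDLProv ((A.and (Form.box π (Form.box (Prog.star π) A))).iff (Form.box (Prog.star π) A))
  | ind {π : Prog} {A : Form} : PDLProv ((A.and (Form.box (Prog.star π) (A.impl (Form.box π A)))).impl (Form.box (Prog.star π) A))
  | mp {A B : Form} : PDLProv (A.impl B) → PDLProv A → PDLProv B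
  | nec {π : Prog} {A : Form} : PDLProv A → PDLProv (Form.box π A)

/-- The Hilbert system for PDL□ : PDL plus an S5 universal modality. -/
inductive PDLBoxProv : Form → Prop where
  | taut {A : Form} : Taut A → PDLBoxProv A
  | k {π : Prog} {A B : Form} : PDLBoxProv ((Form.box π (A.impl B)).impl ((Form.box π A).impl (Form.box π B)))
  | boxAnd {π : Prog} {A B : Form} : PDLBoxProv ((Form.box π (A.and B)).iff ((Form.box π A).and (Form.box π B)))
  | choice {π₁ π₂ : Prog} {A : Form} : PDLBoxProv ((Form.box (Prog.choice π₁ π₂) A).iff ((Form.box π₁ A).and (Form.box π₂ A)))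
  | test {A B : Form} : PDLBoxProv ((Form.box (Prog.test A) B).iff (A.impl B))
  | seq {π₁ π₂ : Prog} {A : Form} : PDLBoxProv ((Form.box (Prog.seq π₁ π₂) A).iff (Form.box π₁ (Form.box π₂ A)))
  | fixpoint {π : Prog} {A : Form} : PDLBoxProv ((A.and (Form.box π (Form.box (Prog.star π) A))).iff (Form.box (Prog.star π) A))
  | ind {π : Prog} {A : Form} : PDLBoxProv ((A.and (Form.box (Prog.star π) (A.impl (Form.box π A)))).impl (Form.box (Prog.star π) A))
  | kbox {A B : Form} : PDLBoxProv ((Form.nec (A.impl B)).impl ((Form.nec A).impl (Form.nec B)))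
  | t {A : Form} : PDLBoxProv ((Form.nec A).impl A)
  | five {A : Form} : PDLBoxProv ((Form.diam A).impl (Form.nec (Form.diam A)))
  | diaBox {π : Prog} {A : Form} : PDLBoxProv ((Form.dia π A).impl (Form.diam A))
  | mp {A B : Form} : PDLBoxProv (A.impl B) → PDLBoxProv A → PDLBoxProv B
  | nec {π : Prog} {A : Form} : PDLBoxProv A → PDLBoxProv (Form.box π A)
  | necBox {A : Form} : PDLBoxProv A → PDLBoxProv (Form.nec A)

/-- A formula is consistent (w.r.t. PDL□). -/
def Consistent (A : Form) : Prop := ¬ PDLBoxProv (A.impl Form.bot)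

/-- A PDL□-model: `Rbox` is an equivalence relation containing every atomic program relation. -/
def ModelData.IsPDLBox {S : Type} (M : ModelData S) : Prop :=
  Equivalence M.Rbox ∧ ∀ p s t, M.vp p s t → M.Rbox s t

/-- The Fischer–Ladner closure of a set of formulas. -/
inductive FL (Γ : Set Form) : Form → Prop where
  | base {γ : Form} : γ ∈ Γ → FL Γ γ
  | neg {γ : Form} : FL Γ (Form.neg γ) → FL Γ γ
  | orl {γ₁ γ₂ : Form} : FL Γ (Form.or γ₁ γ₂) → FL Γ γ₁
  | orr {γ₁ γ₂ : Form} : FL Γ (Form.or γ₁ γ₂) → FL Γ γ₂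
  | dia {π : Prog} {γ : Form} : FL Γ (Form.dia π γ) → FL Γ γ
  | nec {γ : Form} : FL Γ (Form.nec γ) → FL Γ γ
  | test {γ₁ γ₂ : Form} : FL Γ (Form.dia (Prog.test γ₁) γ₂) → FL Γ γ₁
  | seq {π₁ π₂ : Prog} {γ : Form} : FL Γ (Form.dia (Prog.seq π₁ π₂) γ) → FL Γ (Form.dia π₁ (Form.dia π₂ γ))
  | choicel {π₁ π₂ : Prog} {γ : Form} : FL Γ (Form.dia (Prog.choice π₁ π₂) γ) → FL Γ (Form.dia π₁ γ)
  | choicer {π₁ π₂ : Prog} {γ : Form} : FL Γ (Form.dia (Prog.choice π₁ π₂) γ) → FL Γ (Form.dia π₂ γ)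
  | star1 {π : Prog} {γ : Form} : FL Γ (Form.dia (Prog.star π) γ) → FL Γ (Form.dia π γ)
  | star2 {π : Prog} {γ : Form} : FL Γ (Form.dia (Prog.star π) γ) → FL Γ (Form.dia π (Form.dia (Prog.star π) γ))

/-- FL±(Γ) : the Fischer–Ladner closure together with negations of its members. -/
def FLpm (Γ : Set Form) : Set Form := {γ | FL Γ γ} ∪ {γ | ∃ δ, FL Γ δ ∧ γ = Form.neg δ}

/-- Conjunction of a finite set of formulas. -/
noncomputable def conj (W : Finset Form) : Form := W.toList.foldr Form.and Form.top
/-- Disjunction of a finite set of formulas. -/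
noncomputable def disj (W : Finset Form) : Form := W.toList.foldr Form.or Form.bot

/-- S(Γ): maximal consistent subsets of FL±(Γ). -/
def SStates (Γ : Set Form) : Set (Finset Form) :=
  {W | ↑W ⊆ FLpm Γ ∧ Consistent (conj W) ∧
    ∀ γ ∈ FLpm Γ, γ ∉ W → ¬ Consistent (conj (insert γ W))}

def CanState (Γ : Set Form) : Type := {W : Finset Form // W ∈ SStates Γ}

/-- The canonical PDL□-model. -/
noncomputable def canModel (Γ : Set Form) : ModelData (CanState Γ) where
  vf a := {W | Form.atom a ∈ W.1}
  vp p W₁ W₂ := Consistent ((conj W₁.1).and (Form.dia (Prog.atom p) (conj W₂.1)))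
  Rbox W₁ W₂ := Consistent ((conj W₁.1).and (Form.diam (conj W₂.1)))
/-- A formula is dynamic-modal free (dmff): it contains no `⟨π⟩`. -/
def DMFree : Form → Prop
  | Form.atom _ => True
  | Form.bot => True
  | Form.neg A => DMFree A
  | Form.or A B => DMFree A ∧ DMFree B
  | Form.dia _ _ => False
  | Form.nec A => DMFree A

/-- Program valuations on a state space `S`. -/
def Valu (S : Type) : Type := ℕ → S → S → Prop

/-- A valuation is compatible with `R` when every atomic program relation is contained in `R`. -/
def ValCompat {S : Type} (R : S → S → Prop) (v : Valu S) : Prop := ∀ p s t, v p s t → R s t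

/-- A PEDAL-model. -/
structure PModel (S : Type) where
  vf : ℕ → Set S
  Rbox : S → S → Prop
  equiv : Equivalence Rbox
  Part : Set (Set (Valu S))
  mu : Set (Valu S) → ℝ
  part_finite : Part.Finite
  part_val : ∀ P ∈ Part, ∀ v ∈ P, ValCompat Rbox v
  part_disj : ∀ P ∈ Part, ∀ Q ∈ Part, P ≠ Q → Disjoint P Q
  part_cover : ∀ v : Valu S, ValCompat Rbox v → ∃ P ∈ Part, v ∈ P
  mu_nonneg : ∀ P ∈ Part, 0 ≤ mu P
  mu_sum : ∑ᶠ P ∈ Part, mu P = 1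
  mu_supp : ∀ P ∈ Part, mu P ≠ 0 → P.Finite

/-- The PDL□-model `M(v)` obtained from a PEDAL-model by fixing a program valuation. -/
def PModel.toModel {S : Type} (M : PModel S) (v : Valu S) : ModelData S :=
  ⟨M.vf, v, M.Rbox⟩

/-- The measure on sets of valuations induced by spreading each cell's probability uniformly. -/
noncomputable def PModel.meas {S : Type} (M : PModel S) (X : Set (Valu S)) : ℝ :=
  ∑ᶠ P ∈ M.Part, M.mu P * (((P ∩ X).ncard : ℝ) / (P.ncard : ℝ))

/-- The set of (compatible) valuations making `γ` true at `s`, i.e. `Val^S_p(s,γ)`. -/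
def PModel.valSet {S : Type} (M : PModel S) (s : S) (γ : Form) : Set (Valu S) :=
  {v | ValCompat M.Rbox v ∧ Sat (M.toModel v) s γ}

/-- μ(s, γ): the induced probability of the ground formula γ at state s. -/
noncomputable def PModel.pr {S : Type} (M : PModel S) (s : S) (γ : Form) : ℝ :=
  M.meas (M.valSet s γ)

/-- The probabilistic language L₁. -/
inductive PForm : Type where
  | ge : Form → ℚ → PForm
  | neg : PForm → PForm
  | or : PForm → PForm → PForm
deriving DecidableEq

def PForm.impl (A B : PForm) : PForm := PForm.or (PForm.neg A) B
def PForm.and (A B : PForm) : PForm := PForm.neg (PForm.or (PForm.neg A) (PForm.neg B))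
def PForm.iff (A B : PForm) : PForm := (A.impl B).and (B.impl A)
/-- Pr(γ) < q := ¬ Pr(γ) ≥ q -/
def PForm.lt (γ : Form) (q : ℚ) : PForm := PForm.neg (PForm.ge γ q)
/-- Pr(γ) ≤ q := Pr(¬γ) ≥ 1 − q -/
def PForm.le (γ : Form) (q : ℚ) : PForm := PForm.ge (Form.neg γ) (1 - q)
/-- Pr(γ) = q := Pr(γ) ≥ q ∧ Pr(γ) ≤ q -/
def PForm.eq (γ : Form) (q : ℚ) : PForm := (PForm.ge γ q).and (PForm.le γ q)

def pbeval (v : PForm → Bool) : PForm → Bool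
  | PForm.neg A => ! pbeval v A
  | PForm.or A B => pbeval v A || pbeval v B
  | A => v A

def PTaut (A : PForm) : Prop := ∀ v, pbeval v A = true

/-- The PEDAL proof system (with the infinitary Archimedean rule `r3`). -/
inductive PProv : PForm → Prop where
  | taut {A : PForm} : PTaut A → PProv A
  | a2 {γ : Form} : PProv (PForm.ge γ 0)
  | a3 {γ : Form} : DMFree γ → PProv ((PForm.eq γ 1).or (PForm.eq γ 0))
  | a4 {γ : Form} {r₁ r₂ : ℚ} : 0 ≤ r₁ → r₂ ≤ 1 → r₁ < r₂ →
      PProv ((PForm.le γ r₁).impl (PForm.lt γ r₂))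
  | a5 {γ : Form} {r : ℚ} : 0 ≤ r → r ≤ 1 → PProv ((PForm.lt γ r).impl (PForm.le γ r))
  | a6 {γ₁ γ₂ : Form} {r₁ r₂ : ℚ} : 0 ≤ r₁ → r₁ ≤ 1 → 0 ≤ r₂ → r₂ ≤ 1 →
      PProv ((((PForm.ge γ₁ r₁).and (PForm.ge γ₂ r₂)).and (PForm.eq (γ₁.and γ₂) 0)).impl
        (PForm.ge (Form.or γ₁ γ₂) (min 1 (r₁ + r₂))))
  | a7 {γ₁ γ₂ : Form} {r₁ r₂ : ℚ} : 0 ≤ r₁ → 0 ≤ r₂ → r₁ + r₂ ≤ 1 →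
      PProv (((PForm.le γ₁ r₁).and (PForm.lt γ₂ r₂)).impl (PForm.lt (Form.or γ₁ γ₂) (r₁ + r₂)))
  | mp {A B : PForm} : PProv (A.impl B) → PProv A → PProv B
  | r2 {γ : Form} : PDLBoxProv γ → PProv (PForm.eq γ 1)
  | r3 {A : PForm} {γ : Form} {r : ℚ} : 0 < r → r ≤ 1 →
      (∀ k : ℕ, (1 : ℚ) / r ≤ (k : ℚ) → PProv (A.impl (PForm.ge γ (r - 1 / (k : ℚ))))) →
      PProv (A.impl (PForm.ge γ r))

/-- PEDAL semantics. -/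
def PSat {S : Type} (M : PModel S) (s : S) : PForm → Prop
  | PForm.ge γ q => (q : ℝ) ≤ M.pr s γ
  | PForm.neg A => ¬ PSat M s A
  | PForm.or A B => PSat M s A ∨ PSat M s B

/-- Big conjunction of a list of L₁-formulas. -/
def bigAndP : List PForm → PForm
  | [] => PForm.or (PForm.ge Form.bot 0) (PForm.neg (PForm.ge Form.bot 0))
  | [A] => A
  | A :: l => A.and (bigAndP l)

/-- Big disjunction of a list of ground formulas. -/
def bigOrF : List Form → Form
  | [] => Form.bot
  | [A] => A
  | A :: l => Form.or A (bigOrF l)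

/-- Two states are dmff-compatible when they contain exactly the same dmffs. -/
def DmffComp (W V : Finset Form) : Prop := ∀ γ : Form, DMFree γ → (γ ∈ W ↔ γ ∈ V)

/-- The model induced by a section σ of S(X). -/
noncomputable def secModel (X : Set Form) (σ : CanState X → CanState X) :
    ModelData (CanState X) where
  vf a := {W | Form.atom a ∈ W.1}
  vp p W₁ W₂ := Consistent ((conj (σ W₁).1).and (Form.dia (Prog.atom p) (conj (σ W₂).1)))
  Rbox W₁ W₂ := Consistent ((conj W₁.1).and (Form.diam (conj W₂.1)))


inductive Step : Form → Form → Prop where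
  | neg {γ : Form} : Step (Form.neg γ) γ
  | orl {γ₁ γ₂ : Form} : Step (Form.or γ₁ γ₂) γ₁
  | orr {γ₁ γ₂ : Form} : Step (Form.or γ₁ γ₂) γ₂
  | dia {π : Prog} {γ : Form} : Step (Form.dia π γ) γ
  | nec {γ : Form} : Step (Form.nec γ) γ
  | test {γ₁ γ₂ : Form} : Step (Form.dia (Prog.test γ₁) γ₂) γ₁
  | seq {π₁ π₂ : Prog} {γ : Form} : Step (Form.dia (Prog.seq π₁ π₂) γ) (Form.dia π₁ (Form.dia π₂ γ))
  | choicel {π₁ π₂ : Prog} {γ : Form} : Step (Form.dia (Prog.choice π₁ π₂) γ) (Form.dia π₁ γ)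
  | choicer {π₁ π₂ : Prog} {γ : Form} : Step (Form.dia (Prog.choice π₁ π₂) γ) (Form.dia π₂ γ)
  | star1 {π : Prog} {γ : Form} : Step (Form.dia (Prog.star π) γ) (Form.dia π γ)
  | star2 {π : Prog} {γ : Form} : Step (Form.dia (Prog.star π) γ) (Form.dia π (Form.dia (Prog.star π) γ))

mutual
/-- Finset overapproximation of the FL closure of a single formula. -/
def flF : Form → Finset Form
  | Form.atom a => {Form.atom a}
  | Form.bot => {Form.bot}
  | Form.neg A => insert (Form.neg A) (flF A)
  | Form.or A B => insert (Form.or A B) (flF A ∪ flF B)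
  | Form.nec A => insert (Form.nec A) (flF A)
  | Form.dia π A => flP π A ∪ flF A
termination_by A => sizeOf A
def flP : Prog → Form → Finset Form
  | Prog.atom p, A => {Form.dia (Prog.atom p) A}
  | Prog.test B, A => insert (Form.dia (Prog.test B) A) (flF B)
  | Prog.seq π₁ π₂, A =>
      insert (Form.dia (Prog.seq π₁ π₂) A) (flP π₁ (Form.dia π₂ A) ∪ flP π₂ A)
  | Prog.choice π₁ π₂, A =>
      insert (Form.dia (Prog.choice π₁ π₂) A) (flP π₁ A ∪ flP π₂ A)
  | Prog.star π, A =>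
      insert (Form.dia (Prog.star π) A) (flP π A ∪ flP π (Form.dia (Prog.star π) A))
termination_by π _ => sizeOf π
end

lemma headP (π : Prog) (A : Form) : Form.dia π A ∈ flP π A := by
  cases π <;> simp [flP]

lemma selfMem : ∀ A : Form, A ∈ flF A := by
  intro A
  cases A with
  | dia π B =>
    simp only [flF, Finset.mem_union]
    exact Or.inl (headP π B)
  | _ => simp [flF]

lemma flClosed :
    ∀ n : ℕ,
      (∀ A : Form, sizeOf A = n → ∀ x ∈ flF A, ∀ y, Step x y → y ∈ flF A) ∧
      (∀ (π : Prog) (A : Form), sizeOf π = n →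
        ∀ x ∈ flP π A, ∀ y, Step x y → y ∈ flP π A ∪ flF A) := by
  intro n
  induction n using Nat.strong_induction_on with
  | _ n ih =>
  constructor
  · intro A hA x hx y hy
    cases A with
    | atom a => simp [flF] at hx; subst hx; cases hy
    | bot => simp [flF] at hx; subst hx; cases hy
    | neg A =>
      simp only [flF, Finset.mem_insert] at hx ⊢
      rcases hx with rfl | hx
      · cases hy; exact Or.inr (selfMem _)
      · exact Or.inr ((ih (sizeOf A) (by subst hA; simp; try omega)).1 A rfl x hx y hy)
    | or A B =>
      simp only [flF, Finset.mem_insert, Finset.mem_union] at hx ⊢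
      rcases hx with rfl | hx | hx
      · cases hy
        · exact Or.inr (Or.inl (selfMem _))
        · exact Or.inr (Or.inr (selfMem _))
      · have := (ih (sizeOf A) (by subst hA; simp; try omega)).1 A rfl x hx y hy
        exact Or.inr (Or.inl this)
      · have := (ih (sizeOf B) (by subst hA; simp; try omega)).1 B rfl x hx y hy
        exact Or.inr (Or.inr this)
    | nec A =>
      simp only [flF, Finset.mem_insert] at hx ⊢
      rcases hx with rfl | hx
      · cases hy; exact Or.inr (selfMem _)
      · exact Or.inr ((ih (sizeOf A) (by subst hA; simp; try omega)).1 A rfl x hx y hy)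
    | dia π A =>
      simp only [flF, Finset.mem_union] at hx ⊢
      rcases hx with hx | hx
      · have := (ih (sizeOf π) (by subst hA; simp; try omega)).2 π A rfl x hx y hy
        simpa using this
      · exact Or.inr ((ih (sizeOf A) (by subst hA; simp; try omega)).1 A rfl x hx y hy)
  · intro π A hπ x hx y hy
    cases π with
    | atom p =>
      simp only [flP, Finset.mem_singleton] at hx
      subst hx; cases hy
      exact Finset.mem_union_right _ (selfMem _)
    | test B =>
      simp only [flP, Finset.mem_insert, Finset.mem_union] at hx ⊢
      rcases hx with rfl | hx
      · cases hy
        · exact Or.inr (selfMem _)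
        · exact Or.inl (Or.inr (selfMem _))
      · have := (ih (sizeOf B) (by subst hπ; simp; try omega)).1 B rfl x hx y hy
        exact Or.inl (Or.inr this)
    | seq π₁ π₂ =>
      simp only [flP, Finset.mem_insert, Finset.mem_union] at hx ⊢
      rcases hx with rfl | hx | hx
      · cases hy
        · exact Or.inr (selfMem _)
        · exact Or.inl (Or.inr (Or.inl (headP π₁ (Form.dia π₂ A))))
      · have := (ih (sizeOf π₁) (by subst hπ; simp; try omega)).2 π₁ (Form.dia π₂ A) rfl x hx y hy
        simp only [flF, Finset.mem_union] at this
        tauto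
      · have := (ih (sizeOf π₂) (by subst hπ; simp; try omega)).2 π₂ A rfl x hx y hy
        simp only [Finset.mem_union] at this
        tauto
    | choice π₁ π₂ =>
      simp only [flP, Finset.mem_insert, Finset.mem_union] at hx ⊢
      rcases hx with rfl | hx | hx
      · cases hy
        · exact Or.inr (selfMem _)
        · exact Or.inl (Or.inr (Or.inl (headP π₁ A)))
        · exact Or.inl (Or.inr (Or.inr (headP π₂ A)))
      · have := (ih (sizeOf π₁) (by subst hπ; simp; try omega)).2 π₁ A rfl x hx y hy
        simp only [Finset.mem_union] at this
        tauto
      · have := (ih (sizeOf π₂) (by subst hπ; simp; try omega)).2 π₂ A rfl x hx y hy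
        simp only [Finset.mem_union] at this
        tauto
    | star π =>
      simp only [flP, Finset.mem_insert, Finset.mem_union] at hx ⊢
      rcases hx with rfl | hx | hx
      · cases hy
        · exact Or.inr (selfMem _)
        · exact Or.inl (Or.inr (Or.inl (headP π A)))
        · exact Or.inl (Or.inr (Or.inr (headP π (Form.dia (Prog.star π) A))))
      · have := (ih (sizeOf π) (by subst hπ; simp; try omega)).2 π A rfl x hx y hy
        simp only [Finset.mem_union] at this
        tauto
      · have := (ih (sizeOf π) (by subst hπ; simp; try omega)).2 π (Form.dia (Prog.star π) A) rfl x hx y hy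
        simp only [flF, flP, Finset.mem_union, Finset.mem_insert] at this
        tauto

lemma flF_closed (A : Form) : ∀ x ∈ flF A, ∀ y, Step x y → y ∈ flF A :=
  (flClosed (sizeOf A)).1 A rfl

lemma fl_mem_of_closed {Γ : Set Form} {C : Finset Form}
    (hΓ : ∀ γ ∈ Γ, γ ∈ C) (hC : ∀ x ∈ C, ∀ y, Step x y → y ∈ C) :
    ∀ γ, FL Γ γ → γ ∈ C := by
  intro γ hγ
  induction hγ with
  | base h => exact hΓ _ h
  | neg _ ih => exact hC _ ih _ Step.neg
  | orl _ ih => exact hC _ ih _ Step.orl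
  | orr _ ih => exact hC _ ih _ Step.orr
  | dia _ ih => exact hC _ ih _ Step.dia
  | nec _ ih => exact hC _ ih _ Step.nec
  | test _ ih => exact hC _ ih _ Step.test
  | seq _ ih => exact hC _ ih _ Step.seq
  | choicel _ ih => exact hC _ ih _ Step.choicel
  | choicer _ ih => exact hC _ ih _ Step.choicer
  | star1 _ ih => exact hC _ ih _ Step.star1
  | star2 _ ih => exact hC _ ih _ Step.star2

/-- the Fischer–Ladner closure of a finite set of PDL formulas is finite. -/
theorem stmt2 (Γ : Set Form) (h : Γ.Finite) : {γ | FL Γ γ}.Finite := by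
  classical
  set C : Finset Form := h.toFinset.biUnion flF with hCdef
  have hsub : {γ | FL Γ γ} ⊆ ↑C := by
    intro γ hγ
    refine fl_mem_of_closed ?_ ?_ γ hγ
    · intro δ hδ
      exact Finset.mem_biUnion.2 ⟨δ, h.mem_toFinset.2 hδ, selfMem δ⟩
    · intro x hx y hy
      rcases Finset.mem_biUnion.1 hx with ⟨δ, hδ, hxδ⟩
      exact Finset.mem_biUnion.2 ⟨δ, hδ, flF_closed δ x hxδ y hy⟩
  exact (C.finite_toSet).subset hsub


end PEDAL
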